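/- Let f : ℝⁿ → ℝⁿ and g : ℝⁿ → ℝⁿˣᵐ be locally Lipschitz, let V : ℝⁿ → ℝ be C¹ with μ‖x‖² ≤ V(x) ≤ ν‖x‖² for some 0 < μ ≤ ν, and let Q, S, R be continuous matrix-valued functions with R(x) positive definite. Suppose the dissipation inequality ∇V(x)ᵀ(f(x) + g(x)u) ≤ xᵀQ(x)x + 2xᵀS(x)u + uᵀR(x)u holds for all x, u, and Δ(x) := S(x)R(x)⁻¹S(x)ᵀ − Q(x) is positive definite for all x. Then with the feedback π(x) = −R(x)⁻¹S(x)ᵀx, the derivative of V along the closed-loop vector field satisfies ∇V(x)ᵀ(f(x) + g(x)π(x)) ≤ −xᵀΔ(x)x < 0 for all x ≠ 0. -/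
import Mathlib


open Matrix

/-- main stability theorem: under the dissipation inequality with
QSR supply rate, `R x ≻ 0` and `Δ x := S x (R x)⁻¹ (S x)ᵀ − Q x ≻ 0`, the
structured feedback `π x = −(R x)⁻¹(S x)ᵀ x` makes the Lie derivative of `V`
along the closed loop at most `−xᵀΔ(x)x`, which is negative for `x ≠ 0`. -/
theorem stmt6 {n m : ℕ}
    (f : (Fin n → ℝ) → (Fin n → ℝ))
    (g : (Fin n → ℝ) → Matrix (Fin n) (Fin m) ℝ)
    (hf : LocallyLipschitz f) (hg : LocallyLipschitz fun x i j => g x i j)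
    (V : (Fin n → ℝ) → ℝ) (hV : ContDiff ℝ 1 V)
    (μ ν : ℝ) (hμ : 0 < μ) (hμν : μ ≤ ν)
    (hVbound : ∀ x : Fin n → ℝ, μ * (x ⬝ᵥ x) ≤ V x ∧ V x ≤ ν * (x ⬝ᵥ x))
    (Q : (Fin n → ℝ) → Matrix (Fin n) (Fin n) ℝ) (hQc : Continuous fun x i j => Q x i j)
    (S : (Fin n → ℝ) → Matrix (Fin n) (Fin m) ℝ) (hSc : Continuous fun x i j => S x i j)
    (R : (Fin n → ℝ) → Matrix (Fin m) (Fin m) ℝ) (hRc : Continuous fun x i j => R x i j)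
    (hR : ∀ x, (R x).PosDef)
    (hdissi : ∀ (x : Fin n → ℝ) (u : Fin m → ℝ),
      fderiv ℝ V x (f x + g x *ᵥ u) ≤
        x ⬝ᵥ (Q x) *ᵥ x + 2 * (x ⬝ᵥ (S x) *ᵥ u) + u ⬝ᵥ (R x) *ᵥ u)
    (hΔ : ∀ x, (S x * (R x)⁻¹ * (S x)ᵀ - Q x).PosDef)
    (π : (Fin n → ℝ) → (Fin m → ℝ))
    (hπ : ∀ x, π x = -(((R x)⁻¹ * (S x)ᵀ) *ᵥ x)) :
    ∀ x : Fin n → ℝ,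
      fderiv ℝ V x (f x + g x *ᵥ π x) ≤
        -(x ⬝ᵥ (S x * (R x)⁻¹ * (S x)ᵀ - Q x) *ᵥ x) ∧
      (x ≠ 0 → -(x ⬝ᵥ (S x * (R x)⁻¹ * (S x)ᵀ - Q x) *ᵥ x) < 0) := by
  intro x
  constructor
  · have h := hdissi x (π x)
    refine h.trans (le_of_eq ?_)
    have hinv : (R x)⁻¹ * R x = 1 := Matrix.nonsing_inv_mul _ (isUnit_iff_ne_zero.mpr (hR x).det_pos.ne')
    have hRT : ((R x)⁻¹)ᵀ = (R x)⁻¹ := by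
      have hs : (R x)ᵀ = R x := by
        simpa [Matrix.conjTranspose_eq_transpose_of_trivial] using (hR x).isHermitian.eq
      rw [Matrix.transpose_nonsing_inv, hs]
    -- term 2
    have h2 : x ⬝ᵥ (S x) *ᵥ (π x) = -(x ⬝ᵥ (S x * (R x)⁻¹ * (S x)ᵀ) *ᵥ x) := by
      rw [hπ, Matrix.mulVec_neg, dotProduct_neg, Matrix.mulVec_mulVec,
        Matrix.mul_assoc]
    -- term 3
    have hinv' : R x * (R x)⁻¹ = 1 :=
      Matrix.mul_nonsing_inv _ (isUnit_iff_ne_zero.mpr (hR x).det_pos.ne')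
    have hM : ((R x)⁻¹ * (S x)ᵀ)ᵀ * R x * ((R x)⁻¹ * (S x)ᵀ)
        = S x * (R x)⁻¹ * (S x)ᵀ := by
      rw [Matrix.transpose_mul, hRT, Matrix.transpose_transpose]
      simp only [Matrix.mul_assoc]
      rw [← Matrix.mul_assoc (R x) ((R x)⁻¹) ((S x)ᵀ), hinv', Matrix.one_mul]
    have h3 : (π x) ⬝ᵥ (R x) *ᵥ (π x) = x ⬝ᵥ (S x * (R x)⁻¹ * (S x)ᵀ) *ᵥ x := by
      rw [hπ, Matrix.mulVec_neg, dotProduct_neg, neg_dotProduct, neg_neg,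
        Matrix.dotProduct_mulVec, Matrix.vecMul_mulVec, ← Matrix.dotProduct_mulVec,
        Matrix.mulVec_mulVec, hM]
    rw [h2, h3, Matrix.sub_mulVec, dotProduct_sub]
    ring
  · intro hx
    have := (hΔ x).re_dotProduct_pos hx
    simp only [RCLike.re_to_real, star_trivial] at this
    linarith
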